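/- Let J be a real m × d matrix, ν > 0, s > 0, τ > 0, κ = (ν+1)/((ν+3)s²), and e ∈ ℝ^m with Student-t score g(e)_i = (ν+1)e_i/(ν s² + e_i²). Then the regularized natural gradient δ = (κ JᵀJ + τ I)^{-1} Jᵀ g(e) satisfies ‖δ‖₂ ≤ (1/4)√((ν+1)(ν+3)m/(τν)). -/

import Mathlib

open Matrix

set_option maxHeartbeats 1000000 in
/-- Main bounded-update theorem: the Tikhonov-regularized natural gradient with
a Student-t score has Euclidean norm at most `(1/4)√((ν+1)(ν+3)m/(τν))`,
independent of the scale `s` and of the error `e`. -/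
theorem natsr_bounded_update
    {m d : ℕ} (J : Matrix (Fin m) (Fin d) ℝ)
    (ν s τ : ℝ) (hν : 0 < ν) (hs : 0 < s) (hτ : 0 < τ)
    (e : Fin m → ℝ)
    (κ : ℝ) (hκ : κ = (ν + 1) / ((ν + 3) * s^2))
    (g : Fin m → ℝ) (hg : ∀ i, g i = (ν + 1) * e i / (ν * s^2 + (e i)^2))
    (δ : Fin d → ℝ)
    (hδ : δ = (κ • (Jᵀ * J) + τ • (1 : Matrix (Fin d) (Fin d) ℝ))⁻¹.mulVec
        (Jᵀ.mulVec g)) :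
    Real.sqrt (∑ i, (δ i)^2)
      ≤ (1/4) * Real.sqrt ((ν + 1) * (ν + 3) * m / (τ * ν)) := by
  have hκ0 : 0 < κ := by
    rw [hκ]; positivity
  set A : Matrix (Fin d) (Fin d) ℝ := κ • (Jᵀ * J) + τ • (1 : Matrix (Fin d) (Fin d) ℝ) with hA
  -- quadratic form identity
  have quad : ∀ x : Fin d → ℝ,
      x ⬝ᵥ A.mulVec x = κ * ((J.mulVec x) ⬝ᵥ (J.mulVec x)) + τ * (x ⬝ᵥ x) := by
    intro x
    simp only [hA, Matrix.add_mulVec, Matrix.smul_mulVec, Matrix.one_mulVec,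
      dotProduct_add, dotProduct_smul, smul_eq_mul, ← Matrix.mulVec_mulVec,
      Matrix.dotProduct_mulVec, Matrix.vecMul_transpose]
  have hPD : A.PosDef := by
    rw [Matrix.posDef_iff_dotProduct_mulVec]
    constructor
    · unfold Matrix.IsHermitian
      simp [hA, Matrix.transpose_add, Matrix.transpose_smul, Matrix.transpose_mul,
        Matrix.transpose_transpose]
    · intro x hx
      have hx2 : 0 < x ⬝ᵥ x := by
        have : x ⬝ᵥ x = ∑ i, (x i)^2 := by simp [dotProduct, sq]
        rw [this]
        rcases Function.ne_iff.mp hx with ⟨i, hi⟩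
        have h1 : 0 < (x i)^2 := lt_of_le_of_ne (sq_nonneg _) (Ne.symm (pow_ne_zero 2 hi))
        calc (0:ℝ) < (x i)^2 := h1
          _ ≤ ∑ i, (x i)^2 :=
            Finset.single_le_sum (f := fun j => x j ^ 2) (fun j _ => sq_nonneg _)
              (Finset.mem_univ i)
      have hJ : 0 ≤ (J.mulVec x) ⬝ᵥ (J.mulVec x) := by
        have : (J.mulVec x) ⬝ᵥ (J.mulVec x) = ∑ i, (J.mulVec x i)^2 := by simp [dotProduct, sq]
        rw [this]; positivity
      simp only [star_trivial]
      rw [quad x]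
      nlinarith
  -- A δ = Jᵀ g
  have hAδ : A.mulVec δ = Jᵀ.mulVec g := by
    rw [hδ, Matrix.mulVec_mulVec, Matrix.mul_nonsing_inv _ (hPD.det_pos.ne'.isUnit),
      Matrix.one_mulVec]
  set u : Fin m → ℝ := J.mulVec δ with hu
  set P : ℝ := ∑ i, (δ i)^2 with hP
  set Q : ℝ := ∑ i, (u i)^2 with hQ
  set R : ℝ := ∑ i, (g i)^2 with hR
  set S : ℝ := ∑ i, u i * g i with hS
  have hP0 : 0 ≤ P := by positivity
  have hQ0 : 0 ≤ Q := by positivity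
  have hR0 : 0 ≤ R := by positivity
  -- energy identity: κQ + τP = S
  have energy : κ * Q + τ * P = S := by
    have h1 : δ ⬝ᵥ A.mulVec δ = κ * Q + τ * P := by
      rw [quad δ]
      simp [hQ, hP, dotProduct, sq, hu]
    have h2 : δ ⬝ᵥ A.mulVec δ = S := by
      rw [hAδ, Matrix.dotProduct_mulVec, Matrix.vecMul_transpose]
      simp [hS, dotProduct, hu]
    rw [← h1, h2]
  -- Cauchy-Schwarz
  have cs : S^2 ≤ Q * R := by
    simpa [hS, hQ, hR] using Finset.sum_mul_sq_le_sq_mul_sq Finset.univ u g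
  -- bound on R
  have hRb : R ≤ m * ((ν+1)^2 / (4 * ν * s^2)) := by
    rw [hR]
    calc ∑ i, (g i)^2 ≤ ∑ _i : Fin m, (ν+1)^2 / (4 * ν * s^2) := by
          apply Finset.sum_le_sum
          intro i _
          rw [hg i, div_pow, div_le_div_iff₀ (by positivity) (by positivity)]
          nlinarith [sq_nonneg (ν * s^2 - (e i)^2), sq_nonneg (e i), sq_nonneg (ν*s^2 + (e i)^2), mul_pos hν (mul_pos hs hs)]
      _ = m * ((ν+1)^2 / (4 * ν * s^2)) := by simp [mul_comm]
  -- key: 4 κ τ P ≤ R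
  have key : 4 * κ * τ * P ≤ R := by
    rcases eq_or_lt_of_le hQ0 with hQz | hQp
    · -- Q = 0 ⇒ S = 0 ⇒ P = 0
      have hSz : S = 0 := by
        have h0 : S^2 ≤ 0 := by
          have := cs; rw [← hQz] at this; simpa using this
        have h1 : S^2 = 0 := le_antisymm h0 (sq_nonneg S)
        exact pow_eq_zero_iff (by norm_num) |>.mp h1
      have hPz : P = 0 := by
        have := energy
        rw [← hQz, hSz] at this
        have : τ * P = 0 := by linarith
        have := mul_eq_zero.mp this
        rcases this with h | h
        · exact absurd h hτ.ne'
        · exact h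
      rw [hPz]; nlinarith
    · -- (κQ+τP)² ≥ 4κτQP and (κQ+τP)² = S² ≤ QR
      have h1 : 4 * κ * τ * Q * P ≤ (κ * Q + τ * P)^2 := by nlinarith [sq_nonneg (κ*Q - τ*P)]
      have h2 : (κ * Q + τ * P)^2 ≤ Q * R := by rw [energy]; exact cs
      have : 4 * κ * τ * Q * P ≤ Q * R := le_trans h1 h2
      nlinarith
  -- conclude
  have hPbound : P ≤ (ν + 1) * (ν + 3) * m / (τ * ν) / 16 := by
    have hκτ : κ * τ = (ν + 1) * τ / ((ν + 3) * s^2) := by rw [hκ]; ring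
    have h4 : P ≤ R / (4 * κ * τ) := by
      rw [le_div_iff₀ (by positivity)]
      nlinarith
    have h5 : R / (4 * κ * τ) ≤ (m * ((ν+1)^2 / (4 * ν * s^2))) / (4 * κ * τ) := by
      apply div_le_div_of_nonneg_right hRb (by positivity)
    have h6 : (m * ((ν+1)^2 / (4 * ν * s^2))) / (4 * κ * τ)
        = (ν + 1) * (ν + 3) * m / (τ * ν) / 16 := by
      rw [hκ]
      field_simp
      ring
    linarith
  calc Real.sqrt P ≤ Real.sqrt ((ν + 1) * (ν + 3) * m / (τ * ν) / 16) :=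
        Real.sqrt_le_sqrt hPbound
    _ = (1/4) * Real.sqrt ((ν + 1) * (ν + 3) * m / (τ * ν)) := by
        rw [show (ν + 1) * (ν + 3) * m / (τ * ν) / 16
            = (1/4)^2 * ((ν + 1) * (ν + 3) * m / (τ * ν)) by ring,
          Real.sqrt_mul (by positivity), Real.sqrt_sq (by norm_num)]
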